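/- For any two rational functions φ₁ and φ₂ over ℂ, there exists a rational function c over ℂ (possibly with non-real coefficients) such that c(z) ≠ φ₁(z) and c(z) ≠ φ₂(z) (as points of the Riemann sphere ℂ ∪ {∞}) for every z in the open right half-plane H. -/

import Mathlib

open Polynomial OnePoint

/-- Evaluation of a complex rational function at a point of `ℂ`, as a point of the
Riemann sphere `ℂ ∪ {∞}`. -/
noncomputable def RatFunc.sphereEval (p : RatFunc ℂ) (z : ℂ) : OnePoint ℂ :=
  if p.denom.eval z = 0 then ∞ else ((p.num.eval z / p.denom.eval z : ℂ) : OnePoint ℂ)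

/-- compatibility: absolute value on `ℂ` as a bundled absolute value -/
noncomputable def Complex.abs : AbsoluteValue ℂ ℝ := NormedField.toAbsoluteValue ℂ

lemma Complex.abs_apply' (z : ℂ) : Complex.abs z = ‖z‖ := rfl

lemma Complex.re_le_abs (z : ℂ) : z.re ≤ Complex.abs z := Complex.re_le_norm z

lemma Complex.abs_natCast (n : ℕ) : Complex.abs (n : ℂ) = n := by
  rw [Complex.abs_apply']; simp

lemma Complex.abs_ofReal (r : ℝ) : Complex.abs (r : ℂ) = |r| := by
  rw [Complex.abs_apply']; simp

lemma Complex.abs_exp_sub_one_le {x : ℂ} (hx : Complex.abs x ≤ 1) :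
    Complex.abs (Complex.exp x - 1) ≤ 2 * Complex.abs x := Complex.norm_exp_sub_one_le hx

namespace AvoidAux

/-- zero-free on the open right half plane -/
def ZF (P : Polynomial ℂ) : Prop := ∀ z : ℂ, 0 < z.re → P.eval z ≠ 0

lemma ZF.ne_zero {P : Polynomial ℂ} (h : ZF P) : P ≠ 0 := by
  intro h0
  exact h 1 (by norm_num) (by simp [h0])

lemma ZF.mul {P Q : Polynomial ℂ} (hP : ZF P) (hQ : ZF Q) : ZF (P * Q) := by
  intro z hz
  simp only [eval_mul]
  exact mul_ne_zero (hP z hz) (hQ z hz)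

lemma ZF.pow {P : Polynomial ℂ} (hP : ZF P) (n : ℕ) : ZF (P ^ n) := by
  intro z hz
  simp only [eval_pow]
  exact pow_ne_zero _ (hP z hz)

lemma ZF.one : ZF (1 : Polynomial ℂ) := by intro z _; simp

lemma abs_z_add_one {z : ℂ} (hz : 0 < z.re) : 1 ≤ Complex.abs (z + 1) := by
  calc (1:ℝ) ≤ (z+1).re := by simp; linarith
  _ ≤ Complex.abs (z+1) := Complex.re_le_abs _

lemma zf_X_add_one_pow (d : ℕ) : ZF ((X + Polynomial.C 1 : Polynomial ℂ) ^ d) := by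
  intro z hz
  have h1 := abs_z_add_one hz
  simp only [eval_pow, eval_add, eval_X, eval_C]
  apply pow_ne_zero
  intro h0
  rw [h0] at h1
  simp at h1
  linarith

/-- growth bound on the half plane -/
lemma bnd (P : Polynomial ℂ) : ∃ C : ℝ, 0 < C ∧
    ∀ z : ℂ, 0 < z.re → Complex.abs (P.eval z) ≤ C * Complex.abs (z + 1) ^ P.natDegree := by
  classical
  refine ⟨(∑ i ∈ Finset.range (P.natDegree + 1), Complex.abs (P.coeff i) * 2 ^ i) + 1, ?_, ?_⟩
  · positivity
  intro z hz
  have h1 : 1 ≤ Complex.abs (z + 1) := abs_z_add_one hz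
  have hzb : Complex.abs z ≤ 2 * Complex.abs (z + 1) := by
    calc Complex.abs z = Complex.abs ((z + 1) + (-1)) := by ring_nf
    _ ≤ Complex.abs (z+1) + Complex.abs (-1) := Complex.abs.add_le _ _
    _ = Complex.abs (z+1) + 1 := by simp
    _ ≤ 2 * Complex.abs (z+1) := by linarith
  have heval : P.eval z = ∑ i ∈ Finset.range (P.natDegree + 1), P.coeff i * z ^ i := by
    rw [Polynomial.eval_eq_sum_range]
  rw [heval]
  calc Complex.abs (∑ i ∈ Finset.range (P.natDegree + 1), P.coeff i * z ^ i)
      ≤ ∑ i ∈ Finset.range (P.natDegree + 1), Complex.abs (P.coeff i * z ^ i) :=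
        Complex.abs.sum_le _ _
    _ ≤ ∑ i ∈ Finset.range (P.natDegree + 1),
          Complex.abs (P.coeff i) * 2 ^ i * Complex.abs (z+1) ^ P.natDegree := by
        apply Finset.sum_le_sum
        intro i hi
        rw [map_mul, map_pow]
        have hi' : i ≤ P.natDegree := Nat.lt_succ_iff.mp (Finset.mem_range.mp hi)
        have : Complex.abs z ^ i ≤ (2 * Complex.abs (z+1)) ^ i := by
          apply pow_le_pow_left₀ (Complex.abs.nonneg _) hzb _
        calc Complex.abs (P.coeff i) * Complex.abs z ^ i
            ≤ Complex.abs (P.coeff i) * (2 * Complex.abs (z+1)) ^ i := by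
              apply mul_le_mul_of_nonneg_left this (Complex.abs.nonneg _)
          _ = Complex.abs (P.coeff i) * 2 ^ i * Complex.abs (z+1) ^ i := by ring
          _ ≤ Complex.abs (P.coeff i) * 2 ^ i * Complex.abs (z+1) ^ P.natDegree := by
              apply mul_le_mul_of_nonneg_left (pow_le_pow_right₀ h1 hi')
              positivity
    _ = (∑ i ∈ Finset.range (P.natDegree + 1), Complex.abs (P.coeff i) * 2 ^ i)
          * Complex.abs (z+1) ^ P.natDegree := by rw [Finset.sum_mul]
    _ ≤ ((∑ i ∈ Finset.range (P.natDegree + 1), Complex.abs (P.coeff i) * 2 ^ i) + 1)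
          * Complex.abs (z+1) ^ P.natDegree := by
        apply mul_le_mul_of_nonneg_right _ (by positivity)
        linarith


set_option maxHeartbeats 1000000 in
lemma step (P₁ P₂ Q₁ Q₂ M' Db F' G' Rp Rq : Polynomial ℂ) (ζ : ℂ)
    (hζ : 0 < ζ.re) (hM' : M' ≠ 0)
    (ha1 : P₁.eval ζ ≠ 0)
    (h2 : ¬(P₂.eval ζ = 0 ∧ Q₂.eval ζ = 0))
    (hF' : ZF F') (hG' : ZF G')
    (hRp : P₁ * F' + P₂ * G' = M' * Rp)
    (hRq : Q₁ * F' + Q₂ * G' = M' * Rq)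
    (hDel : P₂ * Q₁ - P₁ * Q₂ = ((X - C ζ) * M') * Db) :
    ∃ F G : Polynomial ℂ, ZF F ∧ ZF G ∧
      ((X - C ζ) * M') ∣ (P₁ * F + P₂ * G) ∧ ((X - C ζ) * M') ∣ (Q₁ * F + Q₂ * G) := by
  obtain ⟨Cb, hCb, hCbnd⟩ := bnd M'
  set d := M'.natDegree with hd
  set hh : Polynomial ℂ := (X + C 1) ^ d with hhh
  have hζ1 : (ζ + 1) ≠ 0 := by
    intro h0
    have : ζ.re + 1 = 0 := by
      have := congrArg Complex.re h0
      simpa using this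
    linarith
  have hhval : ∀ z : ℂ, hh.eval z = (z + 1) ^ d := by
    intro z; simp [hhh]
  set w : ℂ := (ζ + 1) ^ d with hwdef
  have hwne : w ≠ 0 := pow_ne_zero _ hζ1
  -- evaluations
  set a1 := P₁.eval ζ
  set a2 := P₂.eval ζ
  set b1 := Q₁.eval ζ
  set b2 := Q₂.eval ζ
  set u := F'.eval ζ
  set v := G'.eval ζ
  set rp := Rp.eval ζ
  set rq := Rq.eval ζ
  set m := M'.eval ζ with hmdef
  have hu : u ≠ 0 := hF' ζ hζ
  have hv : v ≠ 0 := hG' ζ hζ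
  have hRpζ : a1 * u + a2 * v = m * rp := by
    have := congrArg (eval ζ) hRp; simpa using this
  have hRqζ : b1 * u + b2 * v = m * rq := by
    have := congrArg (eval ζ) hRq; simpa using this
  -- the key identity between Rp and Rq
  have IDE : P₁ * Rq - Q₁ * Rp = -(G' * ((X - C ζ) * Db)) := by
    apply mul_left_cancel₀ hM'
    linear_combination (-P₁) * hRq + Q₁ * hRp + (-G') * hDel
  have IDEζ : a1 * rq - b1 * rp = 0 := by
    have := congrArg (eval ζ) IDE
    simpa using this
  -- common part
  have common : ∀ (n : ℕ) (γ : ℂ), Complex.abs γ * Cb < 1 →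
      (rp * w ^ (n+1) + γ * (a1 * u *
        (∑ i ∈ Finset.range (n+1), (w + γ * m) ^ i * w ^ (n+1-1-i))) = 0) →
      (rq * w ^ (n+1) + γ * (b1 * u *
        (∑ i ∈ Finset.range (n+1), (w + γ * m) ^ i * w ^ (n+1-1-i))) = 0) →
      ∃ F G : Polynomial ℂ, ZF F ∧ ZF G ∧
        ((X - C ζ) * M') ∣ (P₁ * F + P₂ * G) ∧ ((X - C ζ) * M') ∣ (Q₁ * F + Q₂ * G) := by
    intro n γ hsmall heqp heqq
    set f : Polynomial ℂ := hh + C γ * M' with hfdef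
    have hfval : ∀ z : ℂ, f.eval z = (z+1)^d + γ * M'.eval z := by
      intro z; simp [hfdef, hhval]
    have hZFf : ZF f := by
      intro z hz h0
      rw [hfval z] at h0
      have h1 : 1 ≤ Complex.abs (z + 1) := abs_z_add_one hz
      have hzp : (0:ℝ) < Complex.abs (z + 1) ^ d := by positivity
      have habs : Complex.abs ((z+1)^d) = Complex.abs (γ * M'.eval z) := by
        rw [show (z+1)^d = -(γ * M'.eval z) by linear_combination h0]
        simp
    -- contradiction chain
      rw [map_pow, map_mul] at habs
      have hb := hCbnd z hz
      have : Complex.abs (z+1) ^ d ≤ Complex.abs γ * Cb * Complex.abs (z+1) ^ d := by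
        calc Complex.abs (z+1) ^ d = Complex.abs γ * Complex.abs (M'.eval z) := habs
        _ ≤ Complex.abs γ * (Cb * Complex.abs (z+1) ^ d) := by
            apply mul_le_mul_of_nonneg_left _ (Complex.abs.nonneg _)
            exact hb
        _ = Complex.abs γ * Cb * Complex.abs (z+1) ^ d := by ring
      nlinarith [Complex.abs.nonneg γ]
    set T : Polynomial ℂ := ∑ i ∈ Finset.range (n+1), f ^ i * hh ^ (n+1-1-i) with hTdef
    have hGS : T * (f - hh) = f ^ (n+1) - hh ^ (n+1) := geom_sum₂_mul f hh (n+1)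
    have hfh : f - hh = C γ * M' := by rw [hfdef]; ring
    have KEY : P₁ * (F' * f ^ (n+1)) + P₂ * (G' * hh ^ (n+1)) =
        M' * (Rp * hh ^ (n+1) + C γ * (P₁ * F' * T)) := by
      linear_combination (-(P₁ * F')) * hGS + (hh ^ (n+1)) * hRp + (P₁ * F' * T) * hfh
    have KEYq : Q₁ * (F' * f ^ (n+1)) + Q₂ * (G' * hh ^ (n+1)) =
        M' * (Rq * hh ^ (n+1) + C γ * (Q₁ * F' * T)) := by
      linear_combination (-(Q₁ * F')) * hGS + (hh ^ (n+1)) * hRq + (Q₁ * F' * T) * hfh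
    have hTval : T.eval ζ = ∑ i ∈ Finset.range (n+1), (w + γ * m) ^ i * w ^ (n+1-1-i) := by
      rw [hTdef]
      rw [eval_finset_sum]
      apply Finset.sum_congr rfl
      intro i _
      rw [eval_mul, eval_pow, eval_pow, hfval ζ, hhval ζ]
    refine ⟨F' * f ^ (n+1), G' * hh ^ (n+1), ZF.mul hF' (ZF.pow hZFf _),
      ZF.mul hG' (ZF.pow (zf_X_add_one_pow d) _), ?_, ?_⟩
    · rw [KEY]
      have : (X - C ζ) ∣ (Rp * hh ^ (n+1) + C γ * (P₁ * F' * T)) := by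
        rw [dvd_iff_isRoot]
        unfold IsRoot
        rw [eval_add, eval_mul, eval_mul, eval_pow, eval_C, eval_mul, eval_mul, hhval ζ, hTval]
        exact heqp
      obtain ⟨k, hk⟩ := this
      exact ⟨k, by rw [hk]; ring⟩
    · rw [KEYq]
      have : (X - C ζ) ∣ (Rq * hh ^ (n+1) + C γ * (Q₁ * F' * T)) := by
        rw [dvd_iff_isRoot]
        unfold IsRoot
        rw [eval_add, eval_mul, eval_mul, eval_pow, eval_C, eval_mul, eval_mul, hhval ζ, hTval]
        exact heqq
      obtain ⟨k, hk⟩ := this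
      exact ⟨k, by rw [hk]; ring⟩
  -- now the two cases
  by_cases hm : m = 0
  · -- multiple root case
    obtain ⟨n, hn⟩ := exists_nat_gt (Complex.abs (rp * w) / Complex.abs (a1 * u) * Cb)
    set γ : ℂ := -(rp * w) / (((n:ℂ) + 1) * (a1 * u)) with hγdef
    have hn1 : ((n:ℂ) + 1) ≠ 0 := Nat.cast_add_one_ne_zero n
    have ha1u : a1 * u ≠ 0 := mul_ne_zero ha1 hu
    have hγm : γ * (((n:ℂ) + 1) * (a1 * u)) = -(rp * w) := by
      rw [hγdef]; field_simp
    have habsγ : Complex.abs γ * Cb < 1 := by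
      have hB : 0 < Complex.abs (a1 * u) := Complex.abs.pos ha1u
      have h1 : Complex.abs ((n:ℂ) + 1) = (n:ℝ) + 1 := by
        rw [show ((n:ℂ) + 1) = ((n+1 : ℕ) : ℂ) by push_cast; ring]
        rw [Complex.abs_natCast]; push_cast; ring
      have hγabs : Complex.abs γ = Complex.abs (rp * w) / (((n:ℝ) + 1) * Complex.abs (a1*u)) := by
        rw [hγdef, map_div₀, map_neg_eq_map]
        congr 1
        rw [map_mul, h1]
      rw [hγabs]
      rw [div_mul_eq_mul_div, div_lt_one (by positivity)]
      have hn' : Complex.abs (rp * w) / Complex.abs (a1 * u) * Cb < (n:ℝ) + 1 := by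
        linarith
      rw [div_mul_eq_mul_div, div_lt_iff₀ hB] at hn'
      nlinarith [Complex.abs.nonneg (rp*w), Complex.abs.nonneg (a1*u)]
    have hTsum : (∑ i ∈ Finset.range (n+1), (w + γ * m) ^ i * w ^ (n+1-1-i))
        = ((n:ℂ)+1) * w ^ n := by
      have : ∀ i ∈ Finset.range (n+1), (w + γ * m) ^ i * w ^ (n+1-1-i) = w ^ n := by
        intro i hi
        have hi' : i ≤ n := Nat.lt_succ_iff.mp (Finset.mem_range.mp hi)
        rw [hm, mul_zero, add_zero, ← pow_add]
        congr 1
        omega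
      rw [Finset.sum_congr rfl this, Finset.sum_const, Finset.card_range]
      simp
    apply common n γ habsγ
    · rw [hTsum]
      linear_combination (w^n) * hγm
    · rw [hTsum]
      apply mul_left_cancel₀ ha1
      rw [mul_zero]
      linear_combination (b1*w^n) * hγm + (w^(n+1)) * IDEζ
  · -- simple root case
    have ha2 : a2 ≠ 0 := by
      intro h0
      apply h2
      have hDζ : a2 * b1 - a1 * b2 = 0 := by
        have := congrArg (eval ζ) hDel
        simpa using this
      rw [h0] at hDζ
      simp only [zero_mul, zero_sub, neg_eq_zero, mul_eq_zero] at hDζ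
      rcases hDζ with h | h
      · exact absurd h ha1
      · exact ⟨h0, h⟩
    set ρ : ℂ := -(a2 * v) / (a1 * u) with hρdef
    have ha1u : a1 * u ≠ 0 := mul_ne_zero ha1 hu
    have hρne : ρ ≠ 0 := by
      rw [hρdef]
      apply div_ne_zero _ ha1u
      simp only [neg_ne_zero]
      exact mul_ne_zero ha2 hv
    have hρeq : ρ * (a1 * u) = -(a2 * v) := by
      rw [hρdef]; field_simp
    obtain ⟨n, hn⟩ := exists_nat_gt (max (Complex.abs (Complex.log ρ))
      (Complex.abs (w / m) * 2 * Complex.abs (Complex.log ρ) * Cb))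
    have hn1 : ((n:ℂ) + 1) ≠ 0 := Nat.cast_add_one_ne_zero n
    set E : ℂ := Complex.exp (Complex.log ρ / ((n:ℂ) + 1)) with hEdef
    set γ : ℂ := w * (E - 1) / m with hγdef
    have hEN : E ^ (n+1) = ρ := by
      rw [hEdef, ← Complex.exp_nat_mul]
      rw [show ((n+1 : ℕ):ℂ) * (Complex.log ρ / ((n:ℂ)+1)) = Complex.log ρ by
        push_cast; field_simp]
      exact Complex.exp_log hρne
    have habsγ : Complex.abs γ * Cb < 1 := by
      have hlogsmall : Complex.abs (Complex.log ρ / ((n:ℂ)+1)) ≤ 1 := by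
        rw [map_div₀]
        have h1 : Complex.abs ((n:ℂ) + 1) = (n:ℝ) + 1 := by
          rw [show ((n:ℂ) + 1) = ((n+1 : ℕ) : ℂ) by push_cast; ring]
          rw [Complex.abs_natCast]; push_cast; ring
        rw [h1, div_le_one (by positivity)]
        have := le_max_left (Complex.abs (Complex.log ρ))
          (Complex.abs (w / m) * 2 * Complex.abs (Complex.log ρ) * Cb)
        linarith [hn, this]
      have hexp : Complex.abs (E - 1) ≤ 2 * Complex.abs (Complex.log ρ / ((n:ℂ)+1)) :=
        Complex.abs_exp_sub_one_le hlogsmall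
      have h1 : Complex.abs ((n:ℂ) + 1) = (n:ℝ) + 1 := by
        rw [show ((n:ℂ) + 1) = ((n+1 : ℕ) : ℂ) by push_cast; ring]
        rw [Complex.abs_natCast]; push_cast; ring
      have hγbound : Complex.abs γ ≤ Complex.abs (w / m) * (2 * Complex.abs (Complex.log ρ) / ((n:ℝ)+1)) := by
        rw [hγdef]
        rw [show w * (E - 1) / m = (w / m) * (E - 1) by ring]
        rw [map_mul]
        apply mul_le_mul_of_nonneg_left _ (Complex.abs.nonneg _)
        calc Complex.abs (E - 1) ≤ 2 * Complex.abs (Complex.log ρ / ((n:ℂ)+1)) := hexp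
          _ = 2 * Complex.abs (Complex.log ρ) / ((n:ℝ)+1) := by
              rw [map_div₀, h1]; ring
      have hmax2 := le_max_right (Complex.abs (Complex.log ρ))
          (Complex.abs (w / m) * 2 * Complex.abs (Complex.log ρ) * Cb)
      have hlt : Complex.abs (w / m) * 2 * Complex.abs (Complex.log ρ) * Cb < (n:ℝ) + 1 := by
        linarith [hn]
      calc Complex.abs γ * Cb
          ≤ (Complex.abs (w / m) * (2 * Complex.abs (Complex.log ρ) / ((n:ℝ)+1))) * Cb := by
            apply mul_le_mul_of_nonneg_right hγbound (le_of_lt hCb)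
        _ = (Complex.abs (w / m) * 2 * Complex.abs (Complex.log ρ) * Cb) / ((n:ℝ)+1) := by
            ring
        _ < 1 := by
            rw [div_lt_one (by positivity)]
            exact hlt
    have hγm2 : γ * m = w * (E - 1) := by
      rw [hγdef]; field_simp
    have hfζ : w + γ * m = w * E := by
      rw [hγm2]; ring
    have hfN : (w + γ * m) ^ (n+1) = w ^ (n+1) * ρ := by
      rw [hfζ, mul_pow, hEN]
    have hGSζ : (∑ i ∈ Finset.range (n+1), (w + γ * m) ^ i * w ^ (n+1-1-i)) * ((w + γ*m) - w)
        = (w + γ*m) ^ (n+1) - w ^ (n+1) := geom_sum₂_mul _ _ (n+1)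
    set Tζ : ℂ := ∑ i ∈ Finset.range (n+1), (w + γ * m) ^ i * w ^ (n+1-1-i) with hTζdef
    have hGSζ' : Tζ * (γ * m) = w ^ (n+1) * ρ - w ^ (n+1) := by
      calc Tζ * (γ * m) = Tζ * ((w + γ*m) - w) := by ring
        _ = (w + γ*m) ^ (n+1) - w ^ (n+1) := hGSζ
        _ = w ^ (n+1) * ρ - w ^ (n+1) := by rw [hfN]
    apply common n γ habsγ
    · apply mul_left_cancel₀ hm
      rw [mul_zero]
      linear_combination (a1 * u) * hGSζ' + (w^(n+1)) * hρeq + (- w^(n+1)) * hRpζ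
    · apply mul_left_cancel₀ (mul_ne_zero hm ha1)
      rw [mul_zero]
      linear_combination (a1*b1*u) * hGSζ' + (b1*w^(n+1)) * hρeq + (-b1*w^(n+1)) * hRpζ
        + (m*w^(n+1)) * IDEζ


lemma coprime_eval {p q : Polynomial ℂ} (h : IsCoprime p q) (ζ : ℂ) :
    ¬(p.eval ζ = 0 ∧ q.eval ζ = 0) := by
  obtain ⟨a, b, hab⟩ := h
  rintro ⟨hp, hq⟩
  have := congrArg (eval ζ) hab
  simp [hp, hq] at this

lemma main (p₁ q₁ p₂ q₂ : Polynomial ℂ) (hc₁ : IsCoprime p₁ q₁) (hc₂ : IsCoprime p₂ q₂) :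
    ∀ (k : ℕ) (M : Polynomial ℂ), M.natDegree ≤ k → M ≠ 0 →
    M ∣ (p₂ * q₁ - p₁ * q₂) → (∀ z ∈ M.roots, 0 < z.re) →
    ∃ F G : Polynomial ℂ, ZF F ∧ ZF G ∧ M ∣ (p₁ * F + p₂ * G) ∧ M ∣ (q₁ * F + q₂ * G) := by
  intro k
  induction k with
  | zero =>
    intro M hdeg hM0 _ _
    have hdeg0 : M.natDegree = 0 := Nat.le_zero.mp hdeg
    obtain ⟨c, hc⟩ := Polynomial.natDegree_eq_zero.mp hdeg0
    have hcne : c ≠ 0 := by rintro rfl; simp at hc; exact hM0 hc.symm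
    have hu : IsUnit M := by
      rw [← hc]
      exact (Polynomial.isUnit_C).mpr (isUnit_iff_ne_zero.mpr hcne)
    exact ⟨1, 1, ZF.one, ZF.one, hu.dvd, hu.dvd⟩
  | succ k ih =>
    intro M hdeg hM0 hdvd hroots
    by_cases hdeg0 : M.natDegree = 0
    · obtain ⟨c, hc⟩ := Polynomial.natDegree_eq_zero.mp hdeg0
      have hcne : c ≠ 0 := by rintro rfl; simp at hc; exact hM0 hc.symm
      have hu : IsUnit M := by
        rw [← hc]
        exact (Polynomial.isUnit_C).mpr (isUnit_iff_ne_zero.mpr hcne)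
      exact ⟨1, 1, ZF.one, ZF.one, hu.dvd, hu.dvd⟩
    · have hdpos : 0 < M.degree := by
        rw [Polynomial.degree_eq_natDegree hM0]
        exact_mod_cast Nat.pos_of_ne_zero hdeg0
      obtain ⟨ζ, hζroot⟩ := Complex.exists_root hdpos
      have hζmem : ζ ∈ M.roots := by
        rw [Polynomial.mem_roots hM0]
        exact hζroot
      have hζH : 0 < ζ.re := hroots ζ hζmem
      obtain ⟨M', hM'⟩ : (X - C ζ) ∣ M := Polynomial.dvd_iff_isRoot.mpr hζroot
      have hXζ : (X - C ζ : Polynomial ℂ) ≠ 0 := Polynomial.X_sub_C_ne_zero ζ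
      have hM'0 : M' ≠ 0 := by rintro rfl; rw [mul_zero] at hM'; exact hM0 hM'
      have hdeg' : M'.natDegree ≤ k := by
        have : M.natDegree = 1 + M'.natDegree := by
          rw [hM', Polynomial.natDegree_mul hXζ hM'0, Polynomial.natDegree_X_sub_C]
        omega
      have hM'dvdM : M' ∣ M := ⟨X - C ζ, by rw [hM']; ring⟩
      have hM'dvd : M' ∣ (p₂ * q₁ - p₁ * q₂) := dvd_trans hM'dvdM hdvd
      have hroots' : ∀ z ∈ M'.roots, 0 < z.re := by
        intro z hz
        exact hroots z (Multiset.mem_of_le (Polynomial.roots.le_of_dvd hM0 hM'dvdM) hz)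
      obtain ⟨F', G', hF', hG', hd1, hd2⟩ := ih M' hdeg' hM'0 hM'dvd hroots'
      obtain ⟨Rp, hRp⟩ := hd1
      obtain ⟨Rq, hRq⟩ := hd2
      obtain ⟨Db, hDb⟩ : ((X - C ζ) * M') ∣ (p₂ * q₁ - p₁ * q₂) := by rw [← hM']; exact hdvd
      have h2 := coprime_eval hc₂ ζ
      rcases (not_and_or.mp (coprime_eval hc₁ ζ)) with h1 | h1
      · obtain ⟨F, G, hF, hG, hdp, hdq⟩ :=
          step p₁ p₂ q₁ q₂ M' Db F' G' Rp Rq ζ hζH hM'0 h1 h2 hF' hG' hRp hRq hDb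
        exact ⟨F, G, hF, hG, by rw [hM']; exact hdp, by rw [hM']; exact hdq⟩
      · have hDb' : q₂ * p₁ - q₁ * p₂ = ((X - C ζ) * M') * (-Db) := by
          linear_combination -hDb
        obtain ⟨F, G, hF, hG, hdq, hdp⟩ :=
          step q₁ q₂ p₁ p₂ M' (-Db) F' G' Rq Rp ζ hζH hM'0 h1
            (by tauto) hF' hG' hRq hRp hDb'
        exact ⟨F, G, hF, hG, by rw [hM']; exact hdp, by rw [hM']; exact hdq⟩


/-- splitting off the right-half-plane roots -/
lemma split (Δ : Polynomial ℂ) (hΔ : Δ ≠ 0) :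
    ∃ m Δ₀ : Polynomial ℂ, Δ = m * Δ₀ ∧ m ≠ 0 ∧ (∀ z ∈ m.roots, 0 < z.re) ∧ ZF Δ₀ := by
  classical
  set s : Multiset ℂ := Δ.roots.filter (fun z => 0 < z.re) with hs
  set m : Polynomial ℂ := (s.map fun a => X - C a).prod with hm
  have hmonic : m.Monic := by
    apply Polynomial.monic_multiset_prod_of_monic
    intro a _
    exact Polynomial.monic_X_sub_C a
  have hm0 : m ≠ 0 := hmonic.ne_zero
  have hmdvd : m ∣ Δ := by
    refine dvd_trans ?_ (Polynomial.prod_multiset_X_sub_C_dvd Δ)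
    apply Multiset.prod_dvd_prod_of_le
    apply Multiset.map_le_map
    exact Multiset.filter_le _ _
  obtain ⟨Δ₀, hΔ₀⟩ := hmdvd
  have hΔ₀0 : Δ₀ ≠ 0 := by rintro rfl; rw [mul_zero] at hΔ₀; exact hΔ hΔ₀
  have hmroots : m.roots = s := Polynomial.roots_multiset_prod_X_sub_C s
  refine ⟨m, Δ₀, hΔ₀, hm0, ?_, ?_⟩
  · intro z hz
    rw [hmroots, hs] at hz
    exact (Multiset.mem_filter.mp hz).2
  · intro z hz hz0
    have hzr : z ∈ Δ₀.roots := by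
      rw [Polynomial.mem_roots hΔ₀0]
      exact hz0
    have hradd : Δ.roots = m.roots + Δ₀.roots := by
      rw [hΔ₀]
      exact Polynomial.roots_mul (hΔ₀ ▸ hΔ)
    have hcount : Multiset.count z Δ.roots
        = Multiset.count z m.roots + Multiset.count z Δ₀.roots := by
      rw [hradd, Multiset.count_add]
    have hcs : Multiset.count z m.roots = Multiset.count z Δ.roots := by
      rw [hmroots, hs]
      exact Multiset.count_filter_of_pos hz
    have hpos : 0 < Multiset.count z Δ₀.roots := Multiset.count_pos.mpr hzr
    omega

lemma cross (r s : Polynomial ℂ) (hs : s ≠ 0) :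
    (algebraMap (Polynomial ℂ) (RatFunc ℂ) r / algebraMap (Polynomial ℂ) (RatFunc ℂ) s).num * s
      = r * (algebraMap (Polynomial ℂ) (RatFunc ℂ) r / algebraMap (Polynomial ℂ) (RatFunc ℂ) s).denom := by
  apply RatFunc.algebraMap_injective ℂ
  rw [map_mul, map_mul]
  have hsne : algebraMap (Polynomial ℂ) (RatFunc ℂ) s ≠ 0 := RatFunc.algebraMap_ne_zero hs
  have hdne : algebraMap (Polynomial ℂ) (RatFunc ℂ)
      ((algebraMap (Polynomial ℂ) (RatFunc ℂ) r / algebraMap (Polynomial ℂ) (RatFunc ℂ) s).denom) ≠ 0 :=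
    RatFunc.algebraMap_ne_zero (RatFunc.denom_ne_zero _)
  have h1 := (div_eq_iff hdne).mp
    (RatFunc.num_div_denom (algebraMap (Polynomial ℂ) (RatFunc ℂ) r / algebraMap (Polynomial ℂ) (RatFunc ℂ) s))
  rw [h1]
  have h2 : (algebraMap (Polynomial ℂ) (RatFunc ℂ) r / algebraMap (Polynomial ℂ) (RatFunc ℂ) s)
      * algebraMap (Polynomial ℂ) (RatFunc ℂ) s = algebraMap (Polynomial ℂ) (RatFunc ℂ) r :=
    div_mul_cancel₀ _ hsne
  linear_combination (algebraMap (Polynomial ℂ) (RatFunc ℂ)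
    ((algebraMap (Polynomial ℂ) (RatFunc ℂ) r / algebraMap (Polynomial ℂ) (RatFunc ℂ) s).denom)) * h2

/-- the avoidance criterion -/
lemma avoid (r s : Polynomial ℂ) (c : RatFunc ℂ) (hcross : c.num * s = r * c.denom)
    (φ : RatFunc ℂ)
    (hV : ∀ z : ℂ, 0 < z.re → (r * φ.denom - φ.num * s).eval z ≠ 0) :
    ∀ z : ℂ, 0 < z.re → c.sphereEval z ≠ φ.sphereEval z := by
  have hcop : IsCoprime c.num c.denom := RatFunc.isCoprime_num_denom c
  intro z hz
  have hVz := hV z hz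
  rw [eval_sub, eval_mul, eval_mul] at hVz
  have hcrossz : c.num.eval z * s.eval z = r.eval z * c.denom.eval z := by
    have := congrArg (eval z) hcross
    simpa using this
  rw [RatFunc.sphereEval, RatFunc.sphereEval]
  by_cases hD : c.denom.eval z = 0 <;> by_cases hq : φ.denom.eval z = 0
  · -- both infinite: impossible
    exfalso
    have hN : c.num.eval z ≠ 0 := by
      intro h0
      exact coprime_eval hcop z ⟨h0, hD⟩
    rw [hD, mul_zero] at hcrossz
    have hsz : s.eval z = 0 := by
      rcases mul_eq_zero.mp hcrossz with h | h
      · exact absurd h hN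
      · exact h
    rw [hq, hsz] at hVz
    simp at hVz
  · simp only [if_pos hD, if_neg hq]
    exact (OnePoint.infty_ne_coe _)
  · simp only [if_neg hD, if_pos hq]
    exact (OnePoint.coe_ne_infty _)
  · simp only [if_neg hD, if_neg hq]
    intro hcontra
    rw [OnePoint.coe_eq_coe] at hcontra
    rw [div_eq_div_iff hD hq] at hcontra
    apply hVz
    have hDV : c.denom.eval z * (r.eval z * φ.denom.eval z - φ.num.eval z * s.eval z) = 0 := by
      linear_combination (-(eval z φ.denom)) * hcrossz + (eval z s) * hcontra
    rcases mul_eq_zero.mp hDV with h | h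
    · exact absurd h hD
    · exact h


lemma finish (φ₁ φ₂ : RatFunc ℂ) (m Δ₀ F G : Polynomial ℂ)
    (hsplit : φ₂.num * φ₁.denom - φ₁.num * φ₂.denom = m * Δ₀)
    (hm0 : m ≠ 0) (hΔ₀ : ZF Δ₀) (hF : ZF F) (hG : ZF G)
    (hd1 : m ∣ (φ₁.num * F + φ₂.num * G))
    (hd2 : m ∣ (φ₁.denom * F + φ₂.denom * G))
    (hqFG : φ₁.denom * F + φ₂.denom * G ≠ 0) :
    ∃ c : RatFunc ℂ, ∀ z : ℂ, 0 < z.re →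
      c.sphereEval z ≠ φ₁.sphereEval z ∧ c.sphereEval z ≠ φ₂.sphereEval z := by
  obtain ⟨r, hr⟩ := hd1
  obtain ⟨s, hs⟩ := hd2
  have hs0 : s ≠ 0 := by rintro rfl; rw [mul_zero] at hs; exact hqFG hs
  have hV1 : r * φ₁.denom - φ₁.num * s = G * Δ₀ := by
    apply mul_left_cancel₀ hm0
    linear_combination (-(φ₁.denom)) * hr + (φ₁.num) * hs + G * hsplit
  have hV2 : r * φ₂.denom - φ₂.num * s = -(F * Δ₀) := by
    apply mul_left_cancel₀ hm0
    linear_combination (-(φ₂.denom)) * hr + (φ₂.num) * hs + (-F) * hsplit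
  refine ⟨algebraMap (Polynomial ℂ) (RatFunc ℂ) r / algebraMap (Polynomial ℂ) (RatFunc ℂ) s,
    fun z hz => ⟨?_, ?_⟩⟩
  · apply avoid r s _ (cross r s hs0) φ₁ _ z hz
    intro z' hz'
    rw [hV1, eval_mul]
    exact mul_ne_zero (hG z' hz') (hΔ₀ z' hz')
  · apply avoid r s _ (cross r s hs0) φ₂ _ z hz
    intro z' hz'
    rw [hV2, eval_neg, eval_mul, neg_ne_zero]
    exact mul_ne_zero (hF z' hz') (hΔ₀ z' hz')


end AvoidAux

open AvoidAux

/-- Any two rational functions can be simultaneously avoided in the right half-plane by a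
(complex) rational function. -/
theorem exists_avoiding_two (φ₁ φ₂ : RatFunc ℂ) :
    ∃ c : RatFunc ℂ, ∀ z : ℂ, 0 < z.re →
      c.sphereEval z ≠ φ₁.sphereEval z ∧ c.sphereEval z ≠ φ₂.sphereEval z := by
  have hc₁ : IsCoprime φ₁.num φ₁.denom := RatFunc.isCoprime_num_denom φ₁
  have hc₂ : IsCoprime φ₂.num φ₂.denom := RatFunc.isCoprime_num_denom φ₂
  have hq₁ : φ₁.denom ≠ 0 := RatFunc.denom_ne_zero φ₁
  have hq₂ : φ₂.denom ≠ 0 := RatFunc.denom_ne_zero φ₂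
  by_cases hΔ : φ₂.num * φ₁.denom - φ₁.num * φ₂.denom = 0
  · -- the two functions are equal
    have hφ : φ₂ = φ₁ := by
      rw [← RatFunc.num_div_denom φ₁, ← RatFunc.num_div_denom φ₂,
        div_eq_div_iff (RatFunc.algebraMap_ne_zero hq₂) (RatFunc.algebraMap_ne_zero hq₁),
        ← map_mul, ← map_mul]
      congr 1
      linear_combination hΔ
    obtain ⟨a, b, hab⟩ := hc₁
    -- choose (r, s) with r * q₁ - p₁ * s = 1 and s ≠ 0
    obtain ⟨r, s, hs0, hV⟩ : ∃ r s : Polynomial ℂ, s ≠ 0 ∧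
        r * φ₁.denom - φ₁.num * s = 1 := by
      by_cases ha : a = 0
      · refine ⟨b + φ₁.num, φ₁.denom, hq₁, ?_⟩
        rw [ha] at hab
        linear_combination hab
      · exact ⟨b, -a, neg_ne_zero.mpr ha, by linear_combination hab⟩
    refine ⟨algebraMap (Polynomial ℂ) (RatFunc ℂ) r / algebraMap (Polynomial ℂ) (RatFunc ℂ) s,
      fun z hz => ⟨?_, ?_⟩⟩
    · apply avoid r s _ (cross r s hs0) φ₁ _ z hz
      intro z' hz'
      rw [hV]
      simp
    · rw [hφ]
      apply avoid r s _ (cross r s hs0) φ₁ _ z hz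
      intro z' hz'
      rw [hV]
      simp
  · obtain ⟨m, Δ₀, hsplit, hm0, hroots, hΔ₀⟩ := split _ hΔ
    obtain ⟨F, G, hF, hG, hd1, hd2⟩ := main φ₁.num φ₁.denom φ₂.num φ₂.denom hc₁ hc₂
      m.natDegree m (le_refl _) hm0 ⟨Δ₀, hsplit⟩ hroots
    by_cases hq : φ₁.denom * F + φ₂.denom * G = 0
    · -- fix up s = 0 by a second solution
      obtain ⟨Cm, hCm, hCmbnd⟩ := bnd m
      set K : ℝ := Cm + 1 with hK
      set f₁ : Polynomial ℂ := C (K:ℂ) * (X + C 1) ^ m.natDegree with hf₁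
      set f₂ : Polynomial ℂ := f₁ + m with hf₂
      have hKne : ((K:ℝ):ℂ) ≠ 0 := by
        rw [Complex.ofReal_ne_zero]
        intro h; rw [hK] at h; linarith
      have hZf₁ : ZF f₁ := by
        intro z hz
        rw [hf₁, eval_mul, eval_C, eval_pow, eval_add, eval_X, eval_C]
        apply mul_ne_zero hKne
        apply pow_ne_zero
        intro h0
        have := abs_z_add_one hz
        rw [h0] at this
        simp at this
        linarith
      have hZf₂ : ZF f₂ := by
        intro z hz h0
        rw [hf₂, eval_add, hf₁, eval_mul, eval_C, eval_pow, eval_add, eval_X, eval_C] at h0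
        have h1 : 1 ≤ Complex.abs (z + 1) := abs_z_add_one hz
        have hzp : (0:ℝ) < Complex.abs (z + 1) ^ m.natDegree := by positivity
        have habs : Complex.abs ((K:ℂ) * (z+1) ^ m.natDegree) = Complex.abs (m.eval z) := by
          rw [show (K:ℂ) * (z+1) ^ m.natDegree = -(m.eval z) by linear_combination h0]
          simp
        rw [map_mul, map_pow, Complex.abs_ofReal, abs_of_pos (by rw [hK]; linarith)] at habs
        have hb := hCmbnd z hz
        rw [← habs] at hb
        nlinarith
      refine finish φ₁ φ₂ m Δ₀ (F * f₁) (G * f₂) hsplit hm0 hΔ₀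
        (ZF.mul hF hZf₁) (ZF.mul hG hZf₂) ?_ ?_ ?_
      · obtain ⟨r0, hr0⟩ := hd1
        exact ⟨f₁ * r0 + φ₂.num * G, by rw [hf₂]; linear_combination f₁ * hr0⟩
      · obtain ⟨s0, hs0⟩ := hd2
        exact ⟨f₁ * s0 + φ₂.denom * G, by rw [hf₂]; linear_combination f₁ * hs0⟩
      · have heq : φ₁.denom * (F * f₁) + φ₂.denom * (G * f₂)
            = f₁ * (φ₁.denom * F + φ₂.denom * G) + φ₂.denom * G * m := by
          rw [hf₂]; ring
        rw [heq, hq, mul_zero, zero_add]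
        exact mul_ne_zero (mul_ne_zero hq₂ (ZF.ne_zero hG)) hm0
    · exact finish φ₁ φ₂ m Δ₀ F G hsplit hm0 hΔ₀ hF hG hd1 hd2 hq
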